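/- Let s : [0,1]² → ℝ be continuous, symmetric, and nonnegative, with associated integral operator S on L²([0,1]). Fix z ∈ ℂ⁺. Then there is at most one bounded measurable g : [0,1] → ℂ⁺ satisfying g(x) = −1/(z + (Sg)(x)) for all x ∈ [0,1]. -/

import Mathlib

open Complex MeasureTheory


lemma stmt13_pkg (s : ℝ → ℝ → ℝ)
    (hs_cont : ContinuousOn (fun p : ℝ × ℝ => s p.1 p.2)
      (Set.Icc 0 1 ×ˢ Set.Icc (0 : ℝ) 1))
    (hs_nonneg : ∀ x y, 0 ≤ s x y)
    (z : ℂ) (hz : 0 < z.im)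
    (g : ℝ → ℂ) (hg_meas : Measurable g)
    (hg_bdd : ∃ C, ∀ x, ‖g x‖ ≤ C)
    (hg_up : ∀ x ∈ Set.Icc (0 : ℝ) 1, 0 < (g x).im)
    (hg_eq : ∀ x ∈ Set.Icc (0 : ℝ) 1,
      g x = -(z + ∫ y in Set.Icc (0 : ℝ) 1, (s x y : ℂ) * g y)⁻¹) :
    ContinuousOn g (Set.Icc 0 1) ∧
    (∀ x ∈ Set.Icc (0 : ℝ) 1, IntegrableOn (fun y => (s x y : ℂ) * g y) (Set.Icc 0 1)) ∧
    (∀ x ∈ Set.Icc (0 : ℝ) 1, IntegrableOn (fun y => s x y * (g y).im) (Set.Icc 0 1)) ∧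
    (∀ x ∈ Set.Icc (0 : ℝ) 1, 0 ≤ ∫ y in Set.Icc (0 : ℝ) 1, s x y * (g y).im) ∧
    (∀ x ∈ Set.Icc (0 : ℝ) 1, (z + ∫ y in Set.Icc (0 : ℝ) 1, (s x y : ℂ) * g y) ≠ 0) ∧
    (∀ x ∈ Set.Icc (0 : ℝ) 1, (g x).im =
      (z.im + ∫ y in Set.Icc (0 : ℝ) 1, s x y * (g y).im) * (‖g x‖)^2) := by
  obtain ⟨C, hC⟩ := hg_bdd
  have hC0 : 0 ≤ C := le_trans (norm_nonneg _) (hC 0)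
  obtain ⟨M, hM⟩ := (isCompact_Icc.prod isCompact_Icc).exists_bound_of_continuousOn hs_cont
  have hM0 : 0 ≤ M := le_trans (norm_nonneg _) (hM (0,0) (by simp))
  set K := Set.Icc (0:ℝ) 1 with hK
  -- continuity of x ↦ s x y on K for y ∈ K
  have hsx : ∀ x ∈ K, ContinuousOn (fun y => s x y) K := by
    intro x hx
    exact hs_cont.comp ((continuous_const.prodMk continuous_id).continuousOn :
      ContinuousOn (fun y : ℝ => (x, y)) K) (fun y hy => ⟨hx, hy⟩)
  have hsy : ∀ y ∈ K, ContinuousOn (fun x => s x y) K := by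
    intro y hy
    exact hs_cont.comp ((continuous_id.prodMk continuous_const).continuousOn :
      ContinuousOn (fun x : ℝ => (x, y)) K) (fun x hx => ⟨hx, hy⟩)
  have hsb : ∀ x ∈ K, ∀ y ∈ K, |s x y| ≤ M := fun x hx y hy => hM (x, y) ⟨hx, hy⟩
  -- integrability (complex)
  have int1 : ∀ x ∈ K, IntegrableOn (fun y => (s x y : ℂ) * g y) K := by
    intro x hx
    have meas1 : AEStronglyMeasurable (fun y => (s x y : ℂ) * g y) (volume.restrict K) :=
      ((Complex.continuous_ofReal.comp_continuousOn (hsx x hx)).aestronglyMeasurable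
        measurableSet_Icc).mul hg_meas.aestronglyMeasurable
    refine Integrable.mono' (integrable_const (M * C)) meas1 ?_
    filter_upwards [self_mem_ae_restrict measurableSet_Icc] with y hy
    have : ‖(s x y : ℂ) * g y‖ = |s x y| * ‖g y‖ := by
      simp [norm_mul, Complex.norm_real, Real.norm_eq_abs]
    rw [this]
    exact mul_le_mul (hsb x hx y hy) (hC y) (norm_nonneg _) hM0
  -- integrability (real imaginary part)
  have int2 : ∀ x ∈ K, IntegrableOn (fun y => s x y * (g y).im) K := by
    intro x hx
    have meas2 : AEStronglyMeasurable (fun y => s x y * (g y).im) (volume.restrict K) :=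
      ((hsx x hx).aestronglyMeasurable measurableSet_Icc).mul
        (Complex.measurable_im.comp hg_meas).aestronglyMeasurable
    refine Integrable.mono' (integrable_const (M * C)) meas2 ?_
    filter_upwards [self_mem_ae_restrict measurableSet_Icc] with y hy
    have h1 : |(g y).im| ≤ ‖g y‖ := Complex.abs_im_le_norm _
    have : ‖s x y * (g y).im‖ = |s x y| * |(g y).im| := abs_mul _ _
    rw [this]
    exact mul_le_mul (hsb x hx y hy) (h1.trans (hC y)) (abs_nonneg _) hM0
  -- Im of the integral
  have im_int : ∀ x ∈ K, (∫ y in K, (s x y : ℂ) * g y).im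
      = ∫ y in K, s x y * (g y).im := by
    intro x hx
    have h := integral_im (int1 x hx)
    simp only [RCLike.im_eq_complex_im] at h
    rw [← h]
    congr 1
    ext y
    simp [Complex.mul_im]
  have Gnn : ∀ x ∈ K, 0 ≤ ∫ y in K, s x y * (g y).im := by
    intro x hx
    refine setIntegral_nonneg measurableSet_Icc fun y hy => ?_
    exact mul_nonneg (hs_nonneg x y) (hg_up y hy).le
  -- nonvanishing
  have ane : ∀ x ∈ K, (z + ∫ y in K, (s x y : ℂ) * g y) ≠ 0 := by
    intro x hx h0
    have him : (z + ∫ y in K, (s x y : ℂ) * g y).im = 0 := by rw [h0]; simp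
    rw [Complex.add_im, im_int x hx] at him
    have := Gnn x hx
    linarith
  -- identity
  have ident : ∀ x ∈ K, (g x).im =
      (z.im + ∫ y in K, s x y * (g y).im) * (‖g x‖)^2 := by
    intro x hx
    set a : ℂ := z + ∫ y in K, (s x y : ℂ) * g y with ha
    have ha_ne : a ≠ 0 := ane x hx
    have hgx : g x = -a⁻¹ := hg_eq x hx
    have haim : a.im = z.im + ∫ y in K, s x y * (g y).im := by
      rw [ha, Complex.add_im, im_int x hx]
    have h1 : (g x).im = a.im / Complex.normSq a := by
      rw [hgx, Complex.neg_im, Complex.inv_im]; ring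
    have h2 : (‖g x‖)^2 = (Complex.normSq a)⁻¹ := by
      rw [hgx]
      rw [norm_neg, norm_inv, inv_pow, Complex.sq_norm]
    rw [h1, h2, ← haim]
    ring
  -- continuity of g
  have cont : ContinuousOn g K := by
    have contF : ContinuousOn (fun x => ∫ y in K, (s x y : ℂ) * g y) K := by
      refine continuousOn_of_dominated (bound := fun _ => M * C) ?_ ?_ (integrable_const _) ?_
      · intro x hx
        exact ((Complex.continuous_ofReal.comp_continuousOn (hsx x hx)).aestronglyMeasurable
          measurableSet_Icc).mul hg_meas.aestronglyMeasurable
      · intro x hx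
        filter_upwards [self_mem_ae_restrict measurableSet_Icc] with y hy
        have : ‖(s x y : ℂ) * g y‖ = |s x y| * ‖g y‖ := by
          simp [norm_mul, Complex.norm_real, Real.norm_eq_abs]
        rw [this]
        exact mul_le_mul (hsb x hx y hy) (hC y) (norm_nonneg _) hM0
      · filter_upwards [self_mem_ae_restrict measurableSet_Icc] with y hy
        exact (Complex.continuous_ofReal.comp_continuousOn (hsy y hy)).mul continuousOn_const
    have contRHS : ContinuousOn (fun x => -(z + ∫ y in K, (s x y : ℂ) * g y)⁻¹) K := by
      refine ContinuousOn.neg (ContinuousOn.inv₀ (continuousOn_const.add contF) ?_)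
      exact fun x hx => ane x hx
    exact ContinuousOn.congr contRHS hg_eq
  exact ⟨cont, int1, int2, Gnn, ane, ident⟩


/-- Cauchy–Schwarz-type lemma for integrals. -/
lemma my_cs {μ : Measure ℝ} (f₀ f₁ f₂ : ℝ → ℝ) (h₀ : Integrable f₀ μ)
    (h₁ : Integrable f₁ μ) (h₂ : Integrable f₂ μ)
    (hae : ∀ᵐ y ∂μ, 0 ≤ f₁ y ∧ 0 ≤ f₂ y ∧ f₀ y ≤ Real.sqrt (f₁ y * f₂ y)) :
    ∫ y, f₀ y ∂μ ≤ Real.sqrt ((∫ y, f₁ y ∂μ) * (∫ y, f₂ y ∂μ)) := by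
  set A := ∫ y, f₁ y ∂μ with hA
  set B := ∫ y, f₂ y ∂μ with hB
  have hf₁0 : 0 ≤ᵐ[μ] f₁ := hae.mono fun y hy => hy.1
  have hf₂0 : 0 ≤ᵐ[μ] f₂ := hae.mono fun y hy => hy.2.1
  have hA0 : 0 ≤ A := integral_nonneg_of_ae hf₁0
  have hB0 : 0 ≤ B := integral_nonneg_of_ae hf₂0
  by_cases hAz : A = 0
  · have h₁z : f₁ =ᵐ[μ] 0 := (integral_eq_zero_iff_of_nonneg_ae hf₁0 h₁).mp hAz
    have : ∫ y, f₀ y ∂μ ≤ 0 := by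
      have : f₀ ≤ᵐ[μ] 0 := by
        filter_upwards [hae, h₁z] with y hy hz
        have : f₀ y ≤ Real.sqrt (f₁ y * f₂ y) := hy.2.2
        simpa [hz] using this.trans_eq (by simp [hz])
      exact integral_nonpos_of_ae this
    exact this.trans (Real.sqrt_nonneg _)
  by_cases hBz : B = 0
  · have h₂z : f₂ =ᵐ[μ] 0 := (integral_eq_zero_iff_of_nonneg_ae hf₂0 h₂).mp hBz
    have : ∫ y, f₀ y ∂μ ≤ 0 := by
      have : f₀ ≤ᵐ[μ] 0 := by
        filter_upwards [hae, h₂z] with y hy hz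
        simpa [hz] using hy.2.2.trans_eq (by simp [hz])
      exact integral_nonpos_of_ae this
    exact this.trans (Real.sqrt_nonneg _)
  · have hApos : 0 < A := lt_of_le_of_ne hA0 (Ne.symm hAz)
    have hBpos : 0 < B := lt_of_le_of_ne hB0 (Ne.symm hBz)
    set t : ℝ := Real.sqrt B / Real.sqrt A with ht
    have hsA : 0 < Real.sqrt A := Real.sqrt_pos.mpr hApos
    have hsB : 0 < Real.sqrt B := Real.sqrt_pos.mpr hBpos
    have htpos : 0 < t := div_pos hsB hsA
    have key : ∫ y, f₀ y ∂μ ≤ ∫ y, (t * f₁ y + f₂ y / t) / 2 ∂μ := by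
      refine integral_mono_ae h₀ ?_ ?_
      · exact (((h₁.const_mul t).add (h₂.div_const t)).div_const 2)
      · filter_upwards [hae] with y hy
        have h1 := hy.1; have h2 := hy.2.1
        refine hy.2.2.trans ?_
        have e1 : Real.sqrt (f₁ y * f₂ y) = Real.sqrt (t * f₁ y) * Real.sqrt (f₂ y / t) := by
          rw [← Real.sqrt_mul (by positivity)]
          congr 1
          field_simp
        rw [e1]
        nlinarith [sq_nonneg (Real.sqrt (t * f₁ y) - Real.sqrt (f₂ y / t)),
          Real.sq_sqrt (show (0:ℝ) ≤ t * f₁ y by positivity),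
          Real.sq_sqrt (show (0:ℝ) ≤ f₂ y / t by positivity)]
    have comp : ∫ y, (t * f₁ y + f₂ y / t) / 2 ∂μ = Real.sqrt (A * B) := by
      have : ∫ y, (t * f₁ y + f₂ y / t) / 2 ∂μ = (t * A + B / t) / 2 := by
        rw [integral_div, integral_add (h₁.const_mul t) (h₂.div_const t),
          integral_const_mul, integral_div]
      rw [this, Real.sqrt_mul hA0, ht]
      have eA : A = Real.sqrt A * Real.sqrt A := (Real.mul_self_sqrt hA0).symm
      have eB : B = Real.sqrt B * Real.sqrt B := (Real.mul_self_sqrt hB0).symm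
      field_simp
      nlinarith [hsA, hsB, eA, eB]
    rw [← comp]; exact key

/-- uniqueness of the bounded measurable solution `g : [0,1] → ℂ⁺` of the
quadratic vector equation `g(x) = -1/(z + (Sg)(x))`. -/
theorem stmt_13 (s : ℝ → ℝ → ℝ)
    (hs_cont : ContinuousOn (fun p : ℝ × ℝ => s p.1 p.2)
      (Set.Icc 0 1 ×ˢ Set.Icc (0 : ℝ) 1))
    (hs_symm : ∀ x y, s x y = s y x)
    (hs_nonneg : ∀ x y, 0 ≤ s x y)
    (z : ℂ) (hz : 0 < z.im)
    (g g' : ℝ → ℂ) (hg_meas : Measurable g) (hg'_meas : Measurable g')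
    (hg_bdd : ∃ C, ∀ x, ‖g x‖ ≤ C)
    (hg'_bdd : ∃ C, ∀ x, ‖g' x‖ ≤ C)
    (hg_up : ∀ x ∈ Set.Icc (0 : ℝ) 1, 0 < (g x).im)
    (hg'_up : ∀ x ∈ Set.Icc (0 : ℝ) 1, 0 < (g' x).im)
    (hg_eq : ∀ x ∈ Set.Icc (0 : ℝ) 1,
      g x = -(z + ∫ y in Set.Icc (0 : ℝ) 1, (s x y : ℂ) * g y)⁻¹)
    (hg'_eq : ∀ x ∈ Set.Icc (0 : ℝ) 1,
      g' x = -(z + ∫ y in Set.Icc (0 : ℝ) 1, (s x y : ℂ) * g' y)⁻¹) :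
    ∀ x ∈ Set.Icc (0 : ℝ) 1, g x = g' x := by
  obtain ⟨cont_g, int1g, int2g, Gnn, ane, ident⟩ :=
    stmt13_pkg s hs_cont hs_nonneg z hz g hg_meas hg_bdd hg_up hg_eq
  obtain ⟨cont_g', int1g', int2g', Gnn', ane', ident'⟩ :=
    stmt13_pkg s hs_cont hs_nonneg z hz g' hg'_meas hg'_bdd hg'_up hg'_eq
  set K := Set.Icc (0:ℝ) 1 with hKdef
  obtain ⟨C, hC⟩ := hg_bdd
  obtain ⟨C', hC'⟩ := hg'_bdd
  obtain ⟨M, hM⟩ := (isCompact_Icc.prod isCompact_Icc).exists_bound_of_continuousOn hs_cont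
  have hM0 : 0 ≤ M := le_trans (norm_nonneg _) (hM (0,0) (by simp [hKdef]))
  set w : ℝ → ℝ := fun x => ‖g x - g' x‖ with hwdef
  set u : ℝ → ℝ := fun x => Real.sqrt ((g x).im * (g' x).im) with hudef
  have u_pos : ∀ x ∈ K, 0 < u x := fun x hx =>
    Real.sqrt_pos.mpr (mul_pos (hg_up x hx) (hg'_up x hx))
  have cont_w : ContinuousOn w K :=
    continuous_norm.comp_continuousOn (cont_g.sub cont_g')
  have cont_u : ContinuousOn u K :=
    Real.continuous_sqrt.comp_continuousOn
      ((Complex.continuous_im.comp_continuousOn cont_g).mul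
        (Complex.continuous_im.comp_continuousOn cont_g'))
  have cont_r : ContinuousOn (fun x => w x / u x) K :=
    cont_w.div cont_u (fun x hx => (u_pos x hx).ne')
  obtain ⟨x₀, hx₀, hmax⟩ := isCompact_Icc.exists_isMaxOn
    (Set.nonempty_Icc.mpr zero_le_one) cont_r
  set c := w x₀ / u x₀ with hcdef
  have hwle : ∀ y ∈ K, w y ≤ c * u y := by
    intro y hy
    have h1 : w y / u y ≤ c := hmax hy
    have h2 := u_pos y hy
    calc w y = (w y / u y) * u y := by field_simp
    _ ≤ c * u y := mul_le_mul_of_nonneg_right h1 h2.le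
  suffices hc : c ≤ 0 by
    intro x hx
    have h2 := u_pos x hx
    have h3 : w x ≤ 0 := (hwle x hx).trans (by nlinarith)
    have h4 : ‖g x - g' x‖ = 0 :=
      le_antisymm h3 (norm_nonneg _)
    have := norm_eq_zero.mp h4
    exact sub_eq_zero.mp this
  by_contra hcon
  push_neg at hcon
  -- strict positivity data at x₀
  have hg0 : g x₀ ≠ 0 := fun h => by simpa [h] using hg_up x₀ hx₀
  have hg'0 : g' x₀ ≠ 0 := fun h => by simpa [h] using hg'_up x₀ hx₀
  have hPg : 0 < ‖g x₀‖ := norm_pos_iff.mpr hg0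
  have hPg' : 0 < ‖g' x₀‖ := norm_pos_iff.mpr hg'0
  set A := ∫ y in K, s x₀ y * (g y).im with hAdef
  set B := ∫ y in K, s x₀ y * (g' y).im with hBdef
  have hA0 : 0 ≤ A := Gnn x₀ hx₀
  have hB0 : 0 ≤ B := Gnn' x₀ hx₀
  -- difference identity
  set a : ℂ := z + ∫ y in K, (s x₀ y : ℂ) * g y with hadef
  set a' : ℂ := z + ∫ y in K, (s x₀ y : ℂ) * g' y with ha'def
  have ha : a ≠ 0 := ane x₀ hx₀
  have ha' : a' ≠ 0 := ane' x₀ hx₀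
  have hdiff : g x₀ - g' x₀ = (a - a') * g x₀ * g' x₀ := by
    rw [hg_eq x₀ hx₀, hg'_eq x₀ hx₀, ← hadef, ← ha'def]
    field_simp
    ring
  -- the integral difference
  have hsub : a - a' = ∫ y in K, (s x₀ y : ℂ) * (g y - g' y) := by
    rw [hadef, ha'def]
    have : ∫ y in K, (s x₀ y : ℂ) * (g y - g' y) =
        (∫ y in K, (s x₀ y : ℂ) * g y) - ∫ y in K, (s x₀ y : ℂ) * g' y := by
      rw [← integral_sub (int1g x₀ hx₀) (int1g' x₀ hx₀)]
      congr 1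
      ext y
      ring
    rw [this]
    ring
  -- bound |a - a'| by ∫ s * w
  have habs : ‖a - a'‖ ≤ ∫ y in K, s x₀ y * w y := by
    rw [hsub]
    refine (norm_integral_le_integral_norm _).trans_eq ?_
    congr 1
    ext y
    simp only [hwdef, norm_mul, Complex.norm_real, Real.norm_eq_abs,
      _root_.abs_of_nonneg (hs_nonneg x₀ y)]
  -- integrabilities
  have int_w : IntegrableOn (fun y => s x₀ y * w y) K := by
    have h := ((int1g x₀ hx₀).sub (int1g' x₀ hx₀)).norm
    refine h.congr ?_
    filter_upwards with y
    simp only [hwdef, Pi.sub_apply, ← mul_sub, norm_mul, Complex.norm_real,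
      Real.norm_eq_abs, _root_.abs_of_nonneg (hs_nonneg x₀ y)]
  have u_meas : Measurable u := by
    apply Real.continuous_sqrt.measurable.comp
    exact (Complex.measurable_im.comp hg_meas).mul (Complex.measurable_im.comp hg'_meas)
  have int_u : IntegrableOn (fun y => s x₀ y * u y) K := by
    have hsx : ContinuousOn (fun y => s x₀ y) K :=
      hs_cont.comp ((continuous_const.prodMk continuous_id).continuousOn :
        ContinuousOn (fun y : ℝ => (x₀, y)) K) (fun y hy => ⟨hx₀, hy⟩)
    have meas : AEStronglyMeasurable (fun y => s x₀ y * u y) (volume.restrict K) :=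
      (hsx.aestronglyMeasurable measurableSet_Icc).mul u_meas.aestronglyMeasurable
    refine Integrable.mono' (integrable_const (M * Real.sqrt (C * C'))) meas ?_
    filter_upwards [self_mem_ae_restrict measurableSet_Icc] with y hy
    rw [Real.norm_eq_abs, abs_mul]
    refine mul_le_mul (hM (x₀, y) ⟨hx₀, hy⟩) ?_ (abs_nonneg _) hM0
    simp only [hudef]
    rw [_root_.abs_of_nonneg (Real.sqrt_nonneg _)]
    refine Real.sqrt_le_sqrt ?_
    have h1 : (g y).im ≤ ‖g y‖ := le_trans (le_abs_self _) (Complex.abs_im_le_norm _)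
    have h2 : (g' y).im ≤ ‖g' y‖ := le_trans (le_abs_self _) (Complex.abs_im_le_norm _)
    nlinarith [hg_up y hy, hg'_up y hy, hC y, hC' y, norm_nonneg (g y),
      norm_nonneg (g' y)]
  -- monotone step : ∫ s w ≤ c ∫ s u
  have mono : (∫ y in K, s x₀ y * w y) ≤ c * ∫ y in K, s x₀ y * u y := by
    have step : (∫ y in K, s x₀ y * w y) ≤ ∫ y in K, c * (s x₀ y * u y) := by
      refine setIntegral_mono_on int_w ((int_u).const_mul c) measurableSet_Icc ?_
      intro y hy
      have := hwle y hy
      nlinarith [hs_nonneg x₀ y, (u_pos y hy).le]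
    rwa [integral_const_mul] at step
  -- Cauchy-Schwarz step
  have cs : (∫ y in K, s x₀ y * u y) ≤ Real.sqrt (A * B) := by
    rw [hAdef, hBdef]
    refine my_cs _ _ _ int_u (int2g x₀ hx₀) (int2g' x₀ hx₀) ?_
    filter_upwards [self_mem_ae_restrict measurableSet_Icc] with y hy
    refine ⟨mul_nonneg (hs_nonneg x₀ y) (hg_up y hy).le,
      mul_nonneg (hs_nonneg x₀ y) (hg'_up y hy).le, ?_⟩
    rw [show s x₀ y * (g y).im * (s x₀ y * (g' y).im)
        = (s x₀ y)^2 * ((g y).im * (g' y).im) by ring,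
      Real.sqrt_mul (sq_nonneg _), Real.sqrt_sq (hs_nonneg x₀ y), hudef]
  -- value of u x₀
  have hux₀ : u x₀ = Real.sqrt ((z.im + A) * (z.im + B))
      * (‖g x₀‖ * ‖g' x₀‖) := by
    rw [hudef]
    simp only
    rw [ident x₀ hx₀, ident' x₀ hx₀, ← hAdef, ← hBdef]
    rw [show (z.im + A) * ‖g x₀‖ ^ 2 * ((z.im + B) * ‖g' x₀‖ ^ 2)
        = ((z.im + A) * (z.im + B)) * (‖g x₀‖ * ‖g' x₀‖)^2 by ring,
      Real.sqrt_mul (by nlinarith), Real.sqrt_sq (by positivity)]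
  -- strict inequality
  have hstrict : Real.sqrt (A * B) < Real.sqrt ((z.im + A) * (z.im + B)) :=
    Real.sqrt_lt_sqrt (mul_nonneg hA0 hB0) (by nlinarith)
  -- final chain
  have hwx₀ : w x₀ = ‖a - a'‖ * (‖g x₀‖ * ‖g' x₀‖) := by
    rw [hwdef]
    simp only
    rw [hdiff, norm_mul, norm_mul]
    ring
  have final : w x₀ < c * u x₀ := by
    calc w x₀ = ‖a - a'‖ * (‖g x₀‖ * ‖g' x₀‖) := hwx₀
    _ ≤ (∫ y in K, s x₀ y * w y) * (‖g x₀‖ * ‖g' x₀‖) := by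
        refine mul_le_mul_of_nonneg_right habs (by positivity)
    _ ≤ (c * ∫ y in K, s x₀ y * u y) * (‖g x₀‖ * ‖g' x₀‖) := by
        refine mul_le_mul_of_nonneg_right mono (by positivity)
    _ ≤ (c * Real.sqrt (A * B)) * (‖g x₀‖ * ‖g' x₀‖) := by
        refine mul_le_mul_of_nonneg_right
          (mul_le_mul_of_nonneg_left cs hcon.le) (by positivity)
    _ < (c * Real.sqrt ((z.im + A) * (z.im + B)))
        * (‖g x₀‖ * ‖g' x₀‖) := by
        have hP : 0 < ‖g x₀‖ * ‖g' x₀‖ := mul_pos hPg hPg'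
        exact mul_lt_mul_of_pos_right (mul_lt_mul_of_pos_left hstrict hcon) hP
    _ = c * u x₀ := by rw [hux₀]; ring
  have heq : c * u x₀ = w x₀ := div_mul_cancel₀ _ (u_pos x₀ hx₀).ne'
  rw [heq] at final
  exact lt_irrefl _ final
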